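/- Let W ∈ ℝ^{n×n} be symmetric positive definite. (a) For any S ∈ ℝ^{n×τ} with SᵀWS invertible, setting Π := S(SᵀWS)⁻¹SᵀW and H := S(SᵀWS)⁻¹Sᵀ, for all M, N ∈ ℝ^{d×n}: ‖M(I − Π) + NΠ‖²_{W⁻¹} = ‖M(I − Π)‖²_{W⁻¹} + ‖NΠ‖²_{W⁻¹}, and ‖NΠ‖²_{W⁻¹} = Tr(N H Nᵀ). (b) For a finitely supported sketch distribution (S_j, q_j)_{j=1}^m, setting H̄ := ∑_j q_j H_{S_j} and κ := λmin(W^{1/2} H̄ W^{1/2}), for all M, N ∈ ℝ^{d×n}: ∑_j q_j ‖M(I − Π_{S_j}) + N Π_{S_j}‖²_{W⁻¹} ≤ (1 − κ)‖M‖²_{W⁻¹} + Tr(N H̄ Nᵀ). -/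

import Mathlib

open Matrix

/-- Weighted Frobenius norm squared: ‖X‖²_{W⁻¹} = Tr(X W⁻¹ Xᵀ). -/
noncomputable def wnorm2 {d n : ℕ} (W : Matrix (Fin n) (Fin n) ℝ)
    (X : Matrix (Fin d) (Fin n) ℝ) : ℝ :=
  Matrix.trace (X * W⁻¹ * Xᵀ)

/-- Smallest eigenvalue of a (symmetric) real matrix, as the infimum of its real spectrum. -/
noncomputable def lammin {n : ℕ} (M : Matrix (Fin n) (Fin n) ℝ) : ℝ :=
  sInf (spectrum ℝ M)

lemma trace_psd_nonneg {n : ℕ} {A : Matrix (Fin n) (Fin n) ℝ} (hA : A.PosSemidef) :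
    0 ≤ A.trace :=
  Finset.sum_nonneg fun i _ => by simpa using hA.2 (Finsupp.single i 1)

lemma sub_smul_inf_psd {n : ℕ} {K : Matrix (Fin n) (Fin n) ℝ} (hK : K.IsHermitian) :
    (K - sInf (spectrum ℝ K) • (1 : Matrix (Fin n) (Fin n) ℝ)).PosSemidef := by
  set κ := sInf (spectrum ℝ K) with hκ
  have hsp : spectrum ℝ K = Set.range hK.eigenvalues := hK.spectrum_real_eq_range_eigenvalues
  have hle : ∀ i, κ ≤ hK.eigenvalues i := fun i =>
    csInf_le (by rw [hsp]; exact (Set.finite_range _).bddBelow) (by rw [hsp]; exact ⟨i, rfl⟩)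
  set U : Matrix (Fin n) (Fin n) ℝ := (hK.eigenvectorUnitary : Matrix (Fin n) (Fin n) ℝ) with hU
  have hUU : U * star U = 1 := (Matrix.mem_unitaryGroup_iff).mp hK.eigenvectorUnitary.2
  have hdiag : diagonal (RCLike.ofReal ∘ hK.eigenvalues) - κ • (1 : Matrix (Fin n) (Fin n) ℝ)
      = diagonal (fun i => hK.eigenvalues i - κ) := by
    rw [smul_one_eq_diagonal, ← diagonal_sub]
    congr 1
  have key : K - κ • (1 : Matrix (Fin n) (Fin n) ℝ)
      = U * diagonal (fun i => hK.eigenvalues i - κ) * (star U) := by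
    conv_lhs => rw [hK.spectral_theorem]
    rw [← hdiag, Matrix.mul_sub, Matrix.sub_mul]
    congr 1
    rw [Matrix.mul_smul, Matrix.mul_one, Matrix.smul_mul, hUU]
  rw [key]
  have hd : PosSemidef (diagonal (fun i => hK.eigenvalues i - κ)) :=
    posSemidef_diagonal_iff.mpr fun i => sub_nonneg.mpr (hle i)
  simpa [Matrix.star_eq_conjTranspose] using hd.mul_mul_conjTranspose_same U

lemma smul_trace_le {d n : ℕ} {K : Matrix (Fin n) (Fin n) ℝ} (hK : K.IsHermitian)
    (Y : Matrix (Fin d) (Fin n) ℝ) :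
    sInf (spectrum ℝ K) * (Y * Yᵀ).trace ≤ (Y * K * Yᵀ).trace := by
  set κ := sInf (spectrum ℝ K)
  have h := trace_psd_nonneg ((sub_smul_inf_psd hK).mul_mul_conjTranspose_same Y)
  have e : Y * (K - κ • (1 : Matrix (Fin n) (Fin n) ℝ)) * Yᴴ
      = Y * K * Yᵀ - κ • (Y * Yᵀ) := by
    rw [conjTranspose_eq_transpose_of_trivial, Matrix.mul_sub, Matrix.sub_mul,
      Matrix.mul_smul, Matrix.mul_one, Matrix.smul_mul]
  rw [e, trace_sub, trace_smul, smul_eq_mul] at h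
  linarith

lemma wnorm2_add_of_orth {d n : ℕ} (W : Matrix (Fin n) (Fin n) ℝ)
    (X Y : Matrix (Fin n) (Fin n) ℝ) (M N : Matrix (Fin d) (Fin n) ℝ)
    (h1 : X * W⁻¹ * Yᵀ = 0) (h2 : Y * W⁻¹ * Xᵀ = 0) :
    wnorm2 W (M * X + N * Y) = wnorm2 W (M * X) + wnorm2 W (N * Y) := by
  unfold wnorm2
  have e1 : M * X * W⁻¹ * (N * Y)ᵀ = 0 := by
    calc M * X * W⁻¹ * (N * Y)ᵀ = M * (X * W⁻¹ * Yᵀ) * Nᵀ := by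
          simp only [transpose_mul, Matrix.mul_assoc]
      _ = 0 := by rw [h1, Matrix.mul_zero, Matrix.zero_mul]
  have e2 : N * Y * W⁻¹ * (M * X)ᵀ = 0 := by
    calc N * Y * W⁻¹ * (M * X)ᵀ = N * (Y * W⁻¹ * Xᵀ) * Mᵀ := by
          simp only [transpose_mul, Matrix.mul_assoc]
      _ = 0 := by rw [h2, Matrix.mul_zero, Matrix.zero_mul]
  simp only [Matrix.add_mul, Matrix.mul_add, transpose_add, e1, e2, add_zero, zero_add,
    Matrix.trace_add]

lemma wnorm2_mul_eq {d n : ℕ} (W : Matrix (Fin n) (Fin n) ℝ)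
    (M : Matrix (Fin d) (Fin n) ℝ) (X : Matrix (Fin n) (Fin n) ℝ) :
    wnorm2 W (M * X) = Matrix.trace (M * (X * W⁻¹ * Xᵀ) * Mᵀ) := by
  unfold wnorm2
  congr 1
  simp only [transpose_mul, Matrix.mul_assoc]

theorem projection_norm_identities_and_contraction
    {d n m : ℕ}
    (W Wh : Matrix (Fin n) (Fin n) ℝ) (hW : W.PosDef)
    (hWh : Wh.PosDef) (hWh2 : Wh * Wh = W)
    (τs : Fin m → ℕ) (S : ∀ j, Matrix (Fin n) (Fin (τs j)) ℝ)
    (hS : ∀ j, IsUnit ((S j)ᵀ * W * S j))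
    (q : Fin m → ℝ) (hq : ∀ j, 0 ≤ q j) (hq1 : ∑ j, q j = 1)
    (Pr H : Fin m → Matrix (Fin n) (Fin n) ℝ)
    (hPr : ∀ j, Pr j = S j * ((S j)ᵀ * W * S j)⁻¹ * (S j)ᵀ * W)
    (hH : ∀ j, H j = S j * ((S j)ᵀ * W * S j)⁻¹ * (S j)ᵀ)
    (Hbar : Matrix (Fin n) (Fin n) ℝ) (hHbar : Hbar = ∑ j, q j • H j)
    (κ : ℝ) (hκ : κ = lammin (Wh * Hbar * Wh)) :
    (∀ (M N : Matrix (Fin d) (Fin n) ℝ) (j : Fin m),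
        wnorm2 W (M * (1 - Pr j) + N * Pr j)
          = wnorm2 W (M * (1 - Pr j)) + wnorm2 W (N * Pr j) ∧
        wnorm2 W (N * Pr j) = Matrix.trace (N * H j * Nᵀ)) ∧
    (∀ M N : Matrix (Fin d) (Fin n) ℝ,
        ∑ j, q j * wnorm2 W (M * (1 - Pr j) + N * Pr j)
          ≤ (1 - κ) * wnorm2 W M + Matrix.trace (N * Hbar * Nᵀ)) := by
  have hWdet : IsUnit W.det := hW.det_pos.ne'.isUnit
  have hWhdet : IsUnit Wh.det := hWh.det_pos.ne'.isUnit
  have hWt : Wᵀ = W := by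
    rw [← Matrix.conjTranspose_eq_transpose_of_trivial]; exact hW.1
  have hWht : Whᵀ = Wh := by
    rw [← Matrix.conjTranspose_eq_transpose_of_trivial]; exact hWh.1
  have hWWinv : W * W⁻¹ = 1 := Matrix.mul_nonsing_inv W hWdet
  have hWinvW : W⁻¹ * W = 1 := Matrix.nonsing_inv_mul W hWdet
  have hAinv : ∀ j, ((S j)ᵀ * W * S j)⁻¹ * ((S j)ᵀ * W * S j) = 1 := fun j =>
    Matrix.nonsing_inv_mul _ ((Matrix.isUnit_iff_isUnit_det _).mp (hS j))
  have hHt : ∀ j, (H j)ᵀ = H j := by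
    intro j
    rw [hH j]
    simp only [transpose_mul, transpose_transpose, Matrix.transpose_nonsing_inv, hWt,
      Matrix.mul_assoc]
  have hPH : ∀ j, Pr j = H j * W := fun j => by rw [hPr j, hH j]
  have hHWH : ∀ j, H j * W * H j = H j := by
    intro j
    have h1 : H j * W * H j
        = S j * ((((S j)ᵀ * W * S j)⁻¹ * ((S j)ᵀ * W * S j)) * (((S j)ᵀ * W * S j)⁻¹ * (S j)ᵀ)) := by
      rw [hH j]; simp only [Matrix.mul_assoc]
    rw [h1, hAinv j, Matrix.one_mul, hH j]; simp only [Matrix.mul_assoc]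
  have hPWinv : ∀ j, Pr j * W⁻¹ = H j := by
    intro j
    rw [hPH j, Matrix.mul_assoc, hWWinv, Matrix.mul_one]
  have hPt : ∀ j, (Pr j)ᵀ = W * H j := by
    intro j
    rw [hPH j, transpose_mul, hWt, hHt j]
  have c2 : ∀ j, Pr j * W⁻¹ * (Pr j)ᵀ = H j := by
    intro j
    rw [hPWinv j, hPt j, ← Matrix.mul_assoc, hHWH j]
  have hWinvPt : ∀ j, W⁻¹ * (Pr j)ᵀ = H j := by
    intro j
    rw [hPt j, ← Matrix.mul_assoc, hWinvW, Matrix.one_mul]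
  have c3 : ∀ j, (1 - Pr j) * W⁻¹ * (Pr j)ᵀ = 0 := by
    intro j
    rw [Matrix.sub_mul, Matrix.one_mul, Matrix.sub_mul, hWinvPt j, c2 j, sub_self]
  have c4 : ∀ j, Pr j * W⁻¹ * (1 - Pr j)ᵀ = 0 := by
    intro j
    rw [transpose_sub, transpose_one, Matrix.mul_sub, Matrix.mul_one, c2 j, hPWinv j, sub_self]
  have c1 : ∀ j, (1 - Pr j) * W⁻¹ * (1 - Pr j)ᵀ = W⁻¹ - H j := by
    intro j
    rw [transpose_sub, transpose_one, Matrix.mul_sub, Matrix.mul_one, c3 j, sub_zero,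
      Matrix.sub_mul, Matrix.one_mul, hPWinv j]
  have parta : ∀ (M N : Matrix (Fin d) (Fin n) ℝ) (j : Fin m),
      wnorm2 W (M * (1 - Pr j) + N * Pr j)
        = wnorm2 W (M * (1 - Pr j)) + wnorm2 W (N * Pr j) ∧
      wnorm2 W (N * Pr j) = Matrix.trace (N * H j * Nᵀ) := by
    intro M N j
    refine ⟨wnorm2_add_of_orth W _ _ M N (c3 j) (c4 j), ?_⟩
    rw [wnorm2_mul_eq, c2 j]
  refine ⟨parta, ?_⟩
  intro M N
  have hsum1 : ∀ {e : ℕ} (X : Matrix (Fin e) (Fin n) ℝ),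
      ∑ j, q j * Matrix.trace (X * H j * Xᵀ) = Matrix.trace (X * Hbar * Xᵀ) := by
    intro e X
    rw [hHbar, Matrix.mul_sum, Matrix.sum_mul, Matrix.trace_sum]
    refine Finset.sum_congr rfl fun j _ => ?_
    rw [Matrix.mul_smul, Matrix.smul_mul, Matrix.trace_smul, smul_eq_mul]
  have hMN : ∀ j, wnorm2 W (M * (1 - Pr j) + N * Pr j)
      = wnorm2 W M - Matrix.trace (M * H j * Mᵀ) + Matrix.trace (N * H j * Nᵀ) := by
    intro j
    rw [(parta M N j).1, (parta M N j).2, wnorm2_mul_eq, c1 j, Matrix.mul_sub,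
      Matrix.sub_mul, trace_sub]
    rfl
  -- The key spectral inequality
  have hHbart : Hbarᵀ = Hbar := by
    rw [hHbar, Matrix.transpose_sum]
    exact Finset.sum_congr rfl fun j _ => by rw [transpose_smul, hHt j]
  have hKh : (Wh * Hbar * Wh).IsHermitian := by
    rw [Matrix.IsHermitian, Matrix.conjTranspose_eq_transpose_of_trivial]
    simp only [transpose_mul, hWht, hHbart, Matrix.mul_assoc]
  have hYW : M * Wh⁻¹ * Wh = M := by
    rw [Matrix.mul_assoc, Matrix.nonsing_inv_mul Wh hWhdet, Matrix.mul_one]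
  have hWinv : W⁻¹ = Wh⁻¹ * Wh⁻¹ := by rw [← hWh2, Matrix.mul_inv_rev]
  have hmid : Wh * W⁻¹ * Wh = 1 := by
    rw [hWinv, ← Matrix.mul_assoc, Matrix.mul_nonsing_inv Wh hWhdet, Matrix.one_mul,
      Matrix.nonsing_inv_mul Wh hWhdet]
  have h5 : Matrix.trace (M * Hbar * Mᵀ)
      = Matrix.trace ((M * Wh⁻¹) * (Wh * Hbar * Wh) * (M * Wh⁻¹)ᵀ) := by
    conv_lhs => rw [← hYW]
    simp only [transpose_mul, hWht, Matrix.mul_assoc]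
  have h6 : wnorm2 W M = Matrix.trace ((M * Wh⁻¹) * ((M * Wh⁻¹))ᵀ) := by
    unfold wnorm2
    conv_lhs => rw [← hYW]
    have : M * Wh⁻¹ * Wh * W⁻¹ * (M * Wh⁻¹ * Wh)ᵀ
        = (M * Wh⁻¹) * (Wh * W⁻¹ * Wh) * (M * Wh⁻¹)ᵀ := by
      simp only [transpose_mul, hWht, Matrix.mul_assoc]
    rw [this, hmid, Matrix.mul_one]
  have hineq : κ * wnorm2 W M ≤ Matrix.trace (M * Hbar * Mᵀ) := by
    rw [hκ, h5, h6]
    exact smul_trace_le hKh (M * Wh⁻¹)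
  calc ∑ j, q j * wnorm2 W (M * (1 - Pr j) + N * Pr j)
      = ∑ j, (q j * wnorm2 W M - q j * Matrix.trace (M * H j * Mᵀ)
          + q j * Matrix.trace (N * H j * Nᵀ)) := by
        refine Finset.sum_congr rfl fun j _ => ?_
        rw [hMN j]; ring
    _ = (∑ j, q j) * wnorm2 W M - Matrix.trace (M * Hbar * Mᵀ)
          + Matrix.trace (N * Hbar * Nᵀ) := by
        rw [Finset.sum_add_distrib, Finset.sum_sub_distrib, ← Finset.sum_mul, hsum1 M, hsum1 N]
    _ ≤ (1 - κ) * wnorm2 W M + Matrix.trace (N * Hbar * Nᵀ) := by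
        rw [hq1, one_mul]
        nlinarith [hineq]
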